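/- arXiv:2405.05102 — 2 statements merged into one kernel-verified Lean document; each statement's English description precedes it below -/
import Mathlib

section
/- For every integer k ≥ 1, Σ_{j=1}^k Σ_{m=k+1}^∞ 1/((m−j)·(m−1)) = π²/6 (in particular each inner series converges). -/
open Real Filter Topology MeasureTheory

/-- The harmonic number `h n = ∑_{i=1}^n 1/i`, with `h 0 = 0`. -/
noncomputable def harmonic' (n : ℕ) : ℝ := ∑ i ∈ Finset.Icc 1 n, (1 : ℝ) / i

/-- One-step transition probabilities of the harmonic descent chain,
`p j i = 1/((j-i)·h_{j-1})` for `1 ≤ i < j`. -/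
noncomputable def hdP (j i : ℕ) : ℝ := 1 / (((j : ℝ) - (i : ℝ)) * harmonic' (j - 1))

/-- `b 1 = 1` and `b i = 6 h_{i-1} / (π² (i-1))` for `i ≥ 2`. -/
noncomputable def hdB (i : ℕ) : ℝ :=
  if i = 1 then 1 else 6 * harmonic' (i - 1) / (Real.pi ^ 2 * ((i : ℝ) - 1))

lemma harm_zero : harmonic' 0 = 0 := by simp [harmonic']

lemma harm_succ (n : ℕ) : harmonic' (n + 1) = harmonic' n + 1 / ((n : ℝ) + 1) := by
  rw [harmonic', Finset.sum_Icc_succ_top (by omega), ← harmonic']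
  push_cast; ring

lemma sum_range_inv (c : ℕ) : ∀ d : ℕ,
    ∑ i ∈ Finset.range d, 1 / ((i : ℝ) + (c + 1)) = harmonic' (c + d) - harmonic' c := by
  intro d
  induction d with
  | zero => simp
  | succ d ih =>
    rw [Finset.sum_range_succ, ih, show c + (d + 1) = (c + d) + 1 from rfl, harm_succ]
    push_cast; ring

lemma telescope (f : ℕ → ℝ) (hanti : ∀ m n : ℕ, m ≤ n → f n ≤ f m)
    (hlim : Filter.Tendsto f Filter.atTop (nhds 0)) (d : ℕ) :
    HasSum (fun n => f n - f (n + d)) (∑ i ∈ Finset.range d, f i) := by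
  rw [hasSum_iff_tendsto_nat_of_nonneg
    (fun n => sub_nonneg.mpr (hanti n (n + d) (Nat.le_add_right _ _)))]
  have key : ∀ N : ℕ, ∑ n ∈ Finset.range N, (f n - f (n + d))
      = ∑ i ∈ Finset.range d, f i - ∑ t ∈ Finset.range d, f (N + t) := by
    intro N
    rw [Finset.sum_sub_distrib]
    have h1 := Finset.sum_range_add f d N
    have h2 := Finset.sum_range_add f N d
    rw [Nat.add_comm d N] at h1
    have h3 : ∑ x ∈ Finset.range N, f (d + x) = ∑ n ∈ Finset.range N, f (n + d) := by
      apply Finset.sum_congr rfl; intro x _; rw [Nat.add_comm]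
    rw [h3] at h1
    linarith [h1, h2]
  have htail : Filter.Tendsto (fun N => ∑ t ∈ Finset.range d, f (N + t))
      Filter.atTop (nhds 0) := by
    have := tendsto_finset_sum (Finset.range d)
      (fun t _ => hlim.comp (Filter.tendsto_add_atTop_nat t))
    simpa using this
  simp only [key]
  simpa using tendsto_const_nhds.sub htail

lemma hasSum_inner (k j : ℕ) (hk : 1 ≤ k) (hj1 : 1 ≤ j) (hjk : j ≤ k) :
    HasSum (fun m : ℕ => if k < m then 1 / (((m : ℝ) - j) * ((m : ℝ) - 1)) else 0)
      (if j = 1 then Real.pi ^ 2 / 6 - ∑ i ∈ Finset.range k, 1 / (i : ℝ) ^ 2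
       else (harmonic' (k - 1) - harmonic' (k - j)) / ((j : ℝ) - 1)) := by
  set S : ℝ := if j = 1 then Real.pi ^ 2 / 6 - ∑ i ∈ Finset.range k, 1 / (i : ℝ) ^ 2
       else (harmonic' (k - 1) - harmonic' (k - j)) / ((j : ℝ) - 1) with hS
  have h0 : ∑ i ∈ Finset.range (k + 1),
      (if k < i then 1 / (((i : ℝ) - j) * ((i : ℝ) - 1)) else 0) = 0 := by
    apply Finset.sum_eq_zero
    intro i hi
    rw [Finset.mem_range] at hi
    rw [if_neg (by omega)]
  have hfun : ∀ n : ℕ,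
      (if k < n + (k + 1) then 1 / ((((n + (k + 1) : ℕ) : ℝ) - j) * (((n + (k + 1) : ℕ) : ℝ) - 1)) else 0)
      = 1 / (((n : ℝ) + ((k + 1 - j : ℕ) : ℝ)) * ((n : ℝ) + k)) := by
    intro n
    rw [if_pos (by omega)]
    have hc : ((k + 1 - j : ℕ) : ℝ) = (k : ℝ) + 1 - j := by
      push_cast [Nat.cast_sub (show j ≤ k + 1 by omega)]; ring
    rw [hc]
    push_cast
    ring_nf
  have hshift : HasSum (fun n : ℕ => 1 / (((n : ℝ) + ((k + 1 - j : ℕ) : ℝ)) * ((n : ℝ) + k))) S := by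
    rcases Nat.eq_or_lt_of_le hj1 with h1 | h2
    · -- j = 1
      have hj : j = 1 := h1.symm
      subst hj
      have hkk : (k + 1 - 1 : ℕ) = k := by omega
      rw [hkk, hS, if_pos rfl]
      have hz := (hasSum_nat_add_iff (f := fun n : ℕ => 1 / (n : ℝ) ^ 2) k).mpr
        (by rw [show Real.pi ^ 2 / 6 - ∑ i ∈ Finset.range k, 1 / (i : ℝ) ^ 2
              + ∑ i ∈ Finset.range k, 1 / (i : ℝ) ^ 2 = Real.pi ^ 2 / 6 by ring]
            exact hasSum_zeta_two)
      convert hz using 2 with n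
      · rfl
      push_cast
      ring
    · -- 2 ≤ j
      have hj2 : 2 ≤ j := h2
      set c : ℕ := k - j with hc
      set d : ℕ := j - 1 with hd
      have hcd : c + 1 + d = k := by omega
      set f : ℕ → ℝ := fun n => 1 / ((n : ℝ) + (c + 1)) with hf
      have hanti : ∀ m n : ℕ, m ≤ n → f n ≤ f m := by
        intro m n hmn
        apply one_div_le_one_div_of_le
        · positivity
        · have : (m : ℝ) ≤ n := by exact_mod_cast hmn
          linarith
      have hlim : Filter.Tendsto f Filter.atTop (nhds 0) := by
        have h1 : Filter.Tendsto (fun n : ℕ => (n : ℝ) + (c + 1)) Filter.atTop Filter.atTop :=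
          Filter.tendsto_atTop_add_const_right _ _ tendsto_natCast_atTop_atTop
        have := h1.inv_tendsto_atTop
        simpa [hf, one_div, Pi.inv_def] using this
      have htel := telescope f hanti hlim d
      have hdpos : (0:ℝ) < d := by
        have : 1 ≤ d := by omega
        exact_mod_cast Nat.lt_of_lt_of_le Nat.zero_lt_one this
      have htel2 := htel.div_const (d : ℝ)
      have hval : (∑ i ∈ Finset.range d, f i) / (d : ℝ)
          = (harmonic' (k - 1) - harmonic' (k - j)) / ((j : ℝ) - 1) := by
        rw [hf]
        rw [sum_range_inv c d]
        have h1 : c + d = k - 1 := by omega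
        have h2 : c = k - j := hc
        rw [h1, ← h2]
        have : ((d : ℕ) : ℝ) = (j : ℝ) - 1 := by
          rw [hd]; push_cast [Nat.cast_sub hj1]; ring
        rw [this]
      rw [hval] at htel2
      have hfeq : ∀ n : ℕ, (f n - f (n + d)) / (d : ℝ)
          = 1 / (((n : ℝ) + ((k + 1 - j : ℕ) : ℝ)) * ((n : ℝ) + k)) := by
        intro n
        have hk1j : (k + 1 - j : ℕ) = c + 1 := by omega
        rw [hk1j, hf]
        have hnd : ((n + d : ℕ) : ℝ) = (n : ℝ) + d := by push_cast; ring
        have hkr : (k : ℝ) = (c : ℝ) + 1 + d := by exact_mod_cast congrArg (Nat.cast : ℕ → ℝ) hcd.symm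
        simp only [hnd, hkr]
        have hA : (n : ℝ) + ((c : ℝ) + 1) > 0 := by positivity
        have hB : (n : ℝ) + (d : ℝ) + ((c : ℝ) + 1) > 0 := by positivity
        push_cast
        field_simp
        ring
      rw [hS, if_neg (by omega)]
      exact HasSum.congr_fun htel2 (fun n => (hfeq n).symm)
  have := (hasSum_nat_add_iff
      (f := fun m : ℕ => if k < m then 1 / (((m : ℝ) - j) * ((m : ℝ) - 1)) else 0)
      (k + 1)).mp (hshift.congr_fun hfun)
  rwa [h0, add_zero] at this

lemma reflect_sum (K : ℕ) :
    ∑ d ∈ Finset.Icc 1 K, 1 / ((K : ℝ) + 1 - d) = harmonic' K := by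
  rw [harmonic']
  apply Finset.sum_nbij' (fun d => K + 1 - d) (fun e => K + 1 - e)
  · intro a ha; rw [Finset.mem_Icc] at *; omega
  · intro a ha; rw [Finset.mem_Icc] at *; omega
  · intro a ha; rw [Finset.mem_Icc] at ha; omega
  · intro a ha; rw [Finset.mem_Icc] at ha; omega
  · intro a ha
    rw [Finset.mem_Icc] at ha
    have : ((K + 1 - a : ℕ) : ℝ) = (K : ℝ) + 1 - a := by
      push_cast [Nat.cast_sub (show a ≤ K + 1 by omega)]; ring
    rw [this]

lemma Qkey : ∀ K : ℕ,
    ∑ d ∈ Finset.Icc 1 K, (harmonic' K - harmonic' (K - d)) / (d : ℝ)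
      = ∑ n ∈ Finset.Icc 1 K, 1 / (n : ℝ) ^ 2 := by
  intro K
  induction K with
  | zero => simp
  | succ K ih =>
    rw [Finset.sum_Icc_succ_top (by omega), Finset.sum_Icc_succ_top (by omega)]
    have e1 : ∀ d ∈ Finset.Icc 1 K, (harmonic' (K + 1) - harmonic' (K + 1 - d)) / (d : ℝ)
        = (harmonic' K - harmonic' (K - d)) / (d : ℝ)
          - (1 / ((K : ℝ) + 1)) * (1 / ((K : ℝ) + 1 - d)) := by
      intro d hd
      rw [Finset.mem_Icc] at hd
      have hd1 : (1 : ℝ) ≤ (d : ℝ) := by exact_mod_cast hd.1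
      have hdK : (d : ℝ) ≤ (K : ℝ) := by exact_mod_cast hd.2
      have h1 : K + 1 - d = (K - d) + 1 := by omega
      rw [h1, harm_succ, harm_succ]
      have h2 : ((K - d : ℕ) : ℝ) = (K : ℝ) - d := by
        push_cast [Nat.cast_sub hd.2]; ring
      rw [h2]
      have hne1 : (K : ℝ) + 1 ≠ 0 := by positivity
      have hne2 : (K : ℝ) + 1 - d ≠ 0 := by
        intro h; nlinarith
      have hne3 : (K : ℝ) - d + 1 ≠ 0 := by
        intro h; nlinarith
      have hned : (d : ℝ) ≠ 0 := by positivity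
      field_simp
      ring
    rw [Finset.sum_congr rfl e1, Finset.sum_sub_distrib, ih, ← Finset.mul_sum, reflect_sum]
    have htop : harmonic' (K + 1 - (K + 1)) = 0 := by
      rw [Nat.sub_self]; exact harm_zero
    rw [htop, harm_succ]
    have hne1 : (K : ℝ) + 1 ≠ 0 := by positivity
    push_cast
    field_simp
    ring

theorem double_sum_eq_pi_sq_div_six (k : ℕ) (hk : 1 ≤ k) :
    (∀ j : ℕ, 1 ≤ j → j ≤ k →
      Summable (fun m : ℕ => if k < m then 1 / (((m : ℝ) - j) * ((m : ℝ) - 1)) else 0)) ∧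
    ∑ j ∈ Finset.Icc 1 k,
        ∑' m : ℕ, (if k < m then 1 / (((m : ℝ) - j) * ((m : ℝ) - 1)) else 0)
      = Real.pi ^ 2 / 6 := by
  constructor
  · intro j hj1 hjk
    exact (hasSum_inner k j hk hj1 hjk).summable
  · have ht : ∀ j ∈ Finset.Icc 1 k,
        ∑' m : ℕ, (if k < m then 1 / (((m : ℝ) - j) * ((m : ℝ) - 1)) else 0)
        = (if j = 1 then Real.pi ^ 2 / 6 - ∑ i ∈ Finset.range k, 1 / (i : ℝ) ^ 2
           else (harmonic' (k - 1) - harmonic' (k - j)) / ((j : ℝ) - 1)) := by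
      intro j hj
      rw [Finset.mem_Icc] at hj
      exact (hasSum_inner k j hk hj.1 hj.2).tsum_eq
    rw [Finset.sum_congr rfl ht]
    have hins : Finset.Icc 1 k = insert 1 (Finset.Icc 2 k) := by
      ext x; simp only [Finset.mem_Icc, Finset.mem_insert]; omega
    rw [hins, Finset.sum_insert (by simp), if_pos rfl]
    have h2 : ∑ j ∈ Finset.Icc 2 k,
        (if j = 1 then Real.pi ^ 2 / 6 - ∑ i ∈ Finset.range k, 1 / (i : ℝ) ^ 2
         else (harmonic' (k - 1) - harmonic' (k - j)) / ((j : ℝ) - 1))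
        = ∑ d ∈ Finset.Icc 1 (k - 1), (harmonic' (k - 1) - harmonic' ((k - 1) - d)) / (d : ℝ) := by
      apply Finset.sum_nbij' (fun j => j - 1) (fun d => d + 1)
      · intro a ha; rw [Finset.mem_Icc] at *; omega
      · intro a ha; rw [Finset.mem_Icc] at *; omega
      · intro a ha; rw [Finset.mem_Icc] at ha; omega
      · intro a ha; rw [Finset.mem_Icc] at ha; omega
      · intro a ha
        rw [Finset.mem_Icc] at ha
        rw [if_neg (by omega)]
        have hx : (k - 1) - (a - 1) = k - a := by omega
        have hc : ((a - 1 : ℕ) : ℝ) = (a : ℝ) - 1 := by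
          push_cast [Nat.cast_sub (show 1 ≤ a by omega)]; ring
        rw [hx, hc]
    rw [h2, Qkey (k - 1)]
    have h3 : ∑ i ∈ Finset.range k, 1 / (i : ℝ) ^ 2
        = ∑ n ∈ Finset.Icc 1 (k - 1), 1 / (n : ℝ) ^ 2 := by
      rw [Finset.range_eq_Ico, Finset.sum_eq_sum_Ico_succ_bot (by omega)]
      have : Finset.Ico 1 k = Finset.Icc 1 (k - 1) := by
        ext x; simp only [Finset.mem_Ico, Finset.mem_Icc]; omega
      rw [this]
      norm_num
    rw [h3]
    ring
end

section
/- There exists a constant K < ∞ such that for every integer y ≥ 2 and every real a ≥ 0, Σ_{i=1}^{y−1} p(y,i)·max(log y − log i − a, 0) ≤ K · Σ_{i : 1 ≤ i ≤ y−1, log y − log i ≥ a} p(y,i). -/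
open Real Filter Topology MeasureTheory

lemma harmonic'_pos {n : ℕ} (hn : 1 ≤ n) : 0 < harmonic' n := by
  unfold harmonic'
  apply Finset.sum_pos
  · intro i hi
    simp only [Finset.mem_Icc] at hi
    have : (0:ℝ) < i := by exact_mod_cast Nat.lt_of_lt_of_le Nat.zero_lt_one hi.1
    positivity
  · exact ⟨1, Finset.mem_Icc.mpr ⟨le_refl 1, hn⟩⟩

lemma hdP_pos {y i : ℕ} (hy : 2 ≤ y) (hi : i < y) : 0 < hdP y i := by
  unfold hdP
  have h1 : (0:ℝ) < (y:ℝ) - i := by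
    have : (i:ℝ) < y := by exact_mod_cast hi
    linarith
  have h2 : 0 < harmonic' (y - 1) := harmonic'_pos (by omega)
  positivity

lemma hdP_mono {y i k : ℕ} (hy : 2 ≤ y) (hik : i ≤ k) (hk : k < y) :
    hdP y i ≤ hdP y k := by
  unfold hdP
  have h2 : 0 < harmonic' (y - 1) := harmonic'_pos (by omega)
  have hky : (k:ℝ) < y := by exact_mod_cast hk
  have hik' : (i:ℝ) ≤ k := by exact_mod_cast hik
  apply one_div_le_one_div_of_le
  · nlinarith
  · nlinarith

lemma log_succ_sub_log_le {n : ℕ} (hn : 1 ≤ n) :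
    Real.log ((n:ℝ)+1) - Real.log n ≤ 1 / n := by
  have hn' : (0:ℝ) < n := by exact_mod_cast hn
  rw [← Real.log_div (by positivity) (ne_of_gt hn')]
  have h := Real.log_le_sub_one_of_pos (x := ((n:ℝ)+1)/n) (by positivity)
  have : ((n:ℝ)+1)/n - 1 = 1/n := by field_simp; ring
  linarith

lemma log_le_harmonic_sum {i : ℕ} (hi : 1 ≤ i) :
    ∀ m : ℕ, i ≤ m → Real.log ((m:ℝ)+1) - Real.log i ≤ ∑ k ∈ Finset.Icc i m, (1:ℝ)/k := by
  intro m hm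
  induction m, hm using Nat.le_induction with
  | base =>
    rw [Finset.Icc_self, Finset.sum_singleton]
    exact log_succ_sub_log_le hi
  | succ n hn ih =>
    rw [Finset.sum_Icc_succ_top (by omega : i ≤ n+1)]
    have h1 := log_succ_sub_log_le (n := n+1) (by omega)
    push_cast at h1 ⊢
    linarith

theorem hd_one_step_excess_bound :
    ∃ K : ℝ, ∀ y : ℕ, 2 ≤ y → ∀ a : ℝ, 0 ≤ a →
      ∑ i ∈ Finset.Ico 1 y, hdP y i * max (Real.log y - Real.log i - a) 0
        ≤ K * ∑ i ∈ (Finset.Ico 1 y).filter (fun i : ℕ => a ≤ Real.log y - Real.log i),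
              hdP y i := by
  refine ⟨1, fun y hy a ha => ?_⟩
  set S := (Finset.Ico 1 y).filter (fun i : ℕ => a ≤ Real.log y - Real.log i) with hSdef
  rw [one_mul]
  have hLHS : ∑ i ∈ Finset.Ico 1 y, hdP y i * max (Real.log y - Real.log i - a) 0
      = ∑ i ∈ S, hdP y i * max (Real.log y - Real.log i - a) 0 := by
    refine (Finset.sum_subset (Finset.filter_subset _ _) ?_).symm
    intro i hi hiS
    have : ¬ (a ≤ Real.log y - Real.log i) := by
      intro h
      exact hiS (Finset.mem_filter.mpr ⟨hi, h⟩)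
    have : max (Real.log y - Real.log i - a) 0 = 0 := by
      apply max_eq_right; linarith [not_le.mp this]
    rw [this, mul_zero]
  rw [hLHS]
  rcases S.eq_empty_or_nonempty with hSe | hne
  · rw [hSe]; simp
  set m := S.max' hne with hmdef
  have hmS : m ∈ S := S.max'_mem hne
  obtain ⟨hmI, hma⟩ := Finset.mem_filter.mp hmS
  rw [Finset.mem_Ico] at hmI
  have hSI : S = Finset.Icc 1 m := by
    ext i
    constructor
    · intro hiS
      have := Finset.mem_Ico.mp (Finset.mem_filter.mp hiS).1
      exact Finset.mem_Icc.mpr ⟨this.1, S.le_max' i hiS⟩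
    · intro hi
      rw [Finset.mem_Icc] at hi
      refine Finset.mem_filter.mpr ⟨Finset.mem_Ico.mpr ⟨hi.1, lt_of_le_of_lt hi.2 hmI.2⟩, ?_⟩
      have hlog : Real.log i ≤ Real.log m := by
        apply Real.log_le_log (by exact_mod_cast hi.1)
        exact_mod_cast hi.2
      linarith [hma]
  have key : Real.log y - a ≤ Real.log ((m:ℝ)+1) := by
    rcases eq_or_lt_of_le (Nat.succ_le_of_lt hmI.2) with heq | hlt
    · have : ((m:ℝ)+1) = y := by exact_mod_cast heq
      rw [this]; linarith
    · have hm1S : (m+1) ∉ S := by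
        intro h
        exact absurd (S.le_max' (m+1) h) (by omega)
      have : ¬ (a ≤ Real.log y - Real.log (m+1)) := by
        intro h
        exact hm1S (Finset.mem_filter.mpr ⟨Finset.mem_Ico.mpr ⟨by omega, hlt⟩, by push_cast; exact h⟩)
      push_cast at this
      linarith [not_le.mp this]
  calc ∑ i ∈ S, hdP y i * max (Real.log y - Real.log i - a) 0
      ≤ ∑ i ∈ Finset.Icc 1 m, hdP y i * ∑ k ∈ Finset.Icc i m, (1:ℝ)/k := by
        rw [hSI]
        apply Finset.sum_le_sum
        intro i hi
        rw [Finset.mem_Icc] at hi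
        have hsum := log_le_harmonic_sum hi.1 m hi.2
        have hsum0 : (0:ℝ) ≤ ∑ k ∈ Finset.Icc i m, (1:ℝ)/k := by
          apply Finset.sum_nonneg; intro k hk; positivity
        have hlogm : Real.log i ≤ Real.log m := by
          apply Real.log_le_log (by exact_mod_cast hi.1)
          exact_mod_cast hi.2
        apply mul_le_mul_of_nonneg_left _ (le_of_lt (hdP_pos hy (lt_of_le_of_lt hi.2 hmI.2)))
        apply max_le _ hsum0
        linarith
    _ = ∑ i ∈ Finset.Icc 1 m, ∑ k ∈ Finset.Icc 1 m, (if i ≤ k then hdP y i * (1/(k:ℝ)) else 0) := by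
        apply Finset.sum_congr rfl
        intro i hi
        rw [Finset.mem_Icc] at hi
        rw [Finset.mul_sum]
        have h1 : (Finset.Icc 1 m).filter (fun k => i ≤ k) = Finset.Icc i m := by
          ext k; simp only [Finset.mem_filter, Finset.mem_Icc]; omega
        rw [← h1, Finset.sum_filter]
    _ = ∑ k ∈ Finset.Icc 1 m, ∑ i ∈ Finset.Icc 1 k, hdP y i * (1/(k:ℝ)) := by
        rw [Finset.sum_comm]
        apply Finset.sum_congr rfl
        intro k hk
        rw [Finset.mem_Icc] at hk
        have h1 : (Finset.Icc 1 m).filter (fun i => i ≤ k) = Finset.Icc 1 k := by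
          ext i; simp only [Finset.mem_filter, Finset.mem_Icc]; omega
        rw [← h1, Finset.sum_filter]
    _ ≤ ∑ k ∈ Finset.Icc 1 m, hdP y k := by
        apply Finset.sum_le_sum
        intro k hk
        rw [Finset.mem_Icc] at hk
        have hky : k < y := lt_of_le_of_lt hk.2 hmI.2
        have hbound : ∑ i ∈ Finset.Icc 1 k, hdP y i * (1/(k:ℝ))
            ≤ ∑ i ∈ Finset.Icc 1 k, hdP y k * (1/(k:ℝ)) := by
          apply Finset.sum_le_sum
          intro i hi
          rw [Finset.mem_Icc] at hi
          have hk0 : (0:ℝ) < k := by exact_mod_cast hk.1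
          apply mul_le_mul_of_nonneg_right (hdP_mono hy hi.2 hky) (by positivity)
        have hcard : ∑ i ∈ Finset.Icc 1 k, hdP y k * (1/(k:ℝ)) = hdP y k := by
          rw [Finset.sum_const, Nat.card_Icc]
          have hk0 : (k:ℝ) ≠ 0 := by
            have : (0:ℝ) < k := by exact_mod_cast hk.1
            linarith
          simp only [Nat.add_sub_cancel, nsmul_eq_mul]
          field_simp
        linarith
    _ = ∑ i ∈ S, hdP y i := by rw [hSI]
end
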